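/- Let K ⊂ ℝ be a Kronecker set and let σ be a finite positive Borel measure on ℝ concentrated on K (i.e. σ(ℝ∖K) = 0). Then σ is a Kronecker measure: for every f ∈ L²(ℝ, σ) with |f| = 1 σ-a.e. there exists a sequence (t_n) of real numbers with t_n → ∞ such that ξ_{t_n} → f in L²(ℝ, σ). -/

import Mathlib

open MeasureTheory Filter Topology
open scoped ENNReal NNReal

/-- `ξ_s(x) = exp(2πisx)`. -/
noncomputable def xi (s x : ℝ) : ℂ := Complex.exp (2 * Real.pi * Complex.I * s * x)

/-- A Kronecker set: a compact set on which every unimodular continuous function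
is a uniform limit of characters `x ↦ exp(2πitx)`. -/
def IsKroneckerSet (K : Set ℝ) : Prop :=
  IsCompact K ∧ ∀ f : ℝ → ℂ, ContinuousOn f K → (∀ x ∈ K, ‖f x‖ = 1) →
    ∀ ε : ℝ, 0 < ε → ∃ t : ℝ, ∀ x ∈ K, ‖f x - xi t x‖ < ε

lemma xi_eq (s x : ℝ) : xi s x = Complex.exp (((2 * Real.pi * s * x : ℝ) : ℂ) * Complex.I) := by
  unfold xi; push_cast; ring_nf

lemma xi_norm (s x : ℝ) : ‖xi s x‖ = 1 := by
  rw [xi_eq]; exact Complex.norm_exp_ofReal_mul_I _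

lemma xi_add (s t x : ℝ) : xi (s + t) x = xi s x * xi t x := by
  unfold xi; rw [← Complex.exp_add]; push_cast; ring_nf

lemma xi_zero (x : ℝ) : xi 0 x = 1 := by
  unfold xi; norm_num

lemma xi_neg (s x : ℝ) : xi (-s) x * xi s x = 1 := by
  rw [← xi_add]; simp [xi_zero]

lemma xi_pow (s x : ℝ) (n : ℕ) : xi ((n : ℝ) * s) x = (xi s x) ^ n := by
  unfold xi
  rw [← Complex.exp_nat_mul]; push_cast; ring_nf

lemma xi_cont (x : ℝ) : Continuous fun s => xi s x := by
  unfold xi; fun_prop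

lemma xi_cont' (s : ℝ) : Continuous fun x => xi s x := by
  unfold xi; fun_prop

lemma norm_exp_sub_exp (a b : ℝ) :
    ‖Complex.exp ((a:ℂ) * Complex.I) - Complex.exp ((b:ℂ) * Complex.I)‖ ≤ 2 * |a - b| := by
  have key : Complex.exp ((a:ℂ) * Complex.I) - Complex.exp ((b:ℂ) * Complex.I)
      = Complex.exp ((b:ℂ) * Complex.I) * (Complex.exp (((a - b : ℝ) : ℂ) * Complex.I) - 1) := by
    rw [mul_sub, ← Complex.exp_add]; push_cast; ring_nf
  rw [key, norm_mul, Complex.norm_exp_ofReal_mul_I, one_mul]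
  rcases le_or_gt |a - b| 1 with h | h
  · have habs : ‖((a - b : ℝ) : ℂ) * Complex.I‖ = |a - b| := by
      rw [norm_mul, Complex.norm_I, Complex.norm_real, Real.norm_eq_abs, mul_one]
    have := Complex.norm_exp_sub_one_le (x := ((a - b : ℝ) : ℂ) * Complex.I)
      (by rw [habs]; exact h)
    rw [habs] at this
    convert this using 3 <;> push_cast <;> ring
  · calc ‖Complex.exp (((a - b : ℝ) : ℂ) * Complex.I) - 1‖
        ≤ ‖Complex.exp (((a - b : ℝ) : ℂ) * Complex.I)‖ + ‖(1:ℂ)‖ := norm_sub_le _ _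
      _ ≤ 2 * |a - b| := by
          rw [Complex.norm_exp_ofReal_mul_I]; norm_num; linarith

lemma norm_xi_sub_one_of_sub (a b x : ℝ) :
    ‖xi (a - b) x - 1‖ = ‖xi a x - xi b x‖ := by
  have : xi a x - xi b x = xi b x * (xi (a - b) x - 1) := by
    rw [mul_sub, ← xi_add, mul_one]; ring_nf
  rw [this, norm_mul, xi_norm, one_mul]

lemma norm_xi_neg_sub_one (b x : ℝ) : ‖xi (-b) x - 1‖ = ‖xi b x - 1‖ := by
  have h := norm_xi_sub_one_of_sub 0 b x
  rw [zero_sub, xi_zero] at h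
  rw [h, norm_sub_rev]

lemma bohr_unbounded (K : Set ℝ) (hK : IsKroneckerSet K) (hne : K.Nonempty)
    (δ : ℝ) (hδ : 0 < δ) (M : ℝ) :
    ∃ b : ℝ, M ≤ b ∧ ∀ x ∈ K, ‖xi b x - 1‖ < δ := by
  by_cases hP : ∃ g : ℝ → ℂ, ContinuousOn g K ∧ (∀ x ∈ K, ‖g x‖ = 1) ∧
      ∀ s : ℝ, ∃ x ∈ K, g x ≠ xi s x
  · obtain ⟨g, hgc, hgu, hgne⟩ := hP
    -- approximants
    have hv : ∀ k : ℕ, ∃ v : ℝ, ∀ x ∈ K, ‖g x - xi v x‖ < min (δ / 2) ((k : ℝ) + 1)⁻¹ :=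
      fun k => hK.2 g hgc hgu _ (lt_min (by linarith) (by positivity))
    choose v hv using hv
    -- v is unbounded
    have hub : ∀ C : ℝ, ∃ k, C < |v k| := by
      by_contra h
      push_neg at h
      obtain ⟨C, hC⟩ := h
      have hmem : ∀ k, v k ∈ Set.Icc (-C) C := fun k => abs_le.mp (hC k)
      obtain ⟨L, -, φ, hφ, hlim⟩ :=
        tendsto_subseq_of_bounded (Metric.isBounded_Icc (-C) C) hmem
      obtain ⟨x, hxK, hx⟩ := hgne L
      apply hx
      have h1 : Tendsto (fun k => xi (v (φ k)) x) atTop (𝓝 (xi L x)) :=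
        ((xi_cont x).tendsto L).comp hlim
      have h2 : Tendsto (fun k => ‖g x - xi (v (φ k)) x‖) atTop (𝓝 ‖g x - xi L x‖) :=
        ((continuous_const.sub continuous_id).norm.tendsto _).comp h1
      have h3 : ∀ k : ℕ, ‖g x - xi (v (φ k)) x‖ ≤ ((k : ℝ) + 1)⁻¹ := by
        intro k
        have := (hv (φ k) x hxK).le.trans (min_le_right _ _)
        refine this.trans ?_
        have hk : (k : ℝ) + 1 ≤ (φ k : ℝ) + 1 := by
          have h9 : k ≤ φ k := hφ.le_apply
          have : (k : ℝ) ≤ (φ k : ℝ) := by exact_mod_cast h9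
          linarith
        exact inv_anti₀ (by positivity) hk
      have h4 : Tendsto (fun k : ℕ => ((k : ℝ) + 1)⁻¹) atTop (𝓝 0) :=
        tendsto_one_div_add_atTop_nhds_zero_nat.congr (by intro k; rw [one_div])
      have h5 : ‖g x - xi L x‖ ≤ 0 := le_of_tendsto_of_tendsto' h2 h4 h3
      have : ‖g x - xi L x‖ = 0 := le_antisymm h5 (norm_nonneg _)
      exact sub_eq_zero.mp (norm_eq_zero.mp this)
    -- construct b
    obtain ⟨k2, hk2⟩ := hub (|v 0| + max M 0)
    rcases le_total (v 0) (v k2) with hle | hle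
    · refine ⟨v k2 - v 0, ?_, ?_⟩
      · have : |v k2| - |v 0| ≤ |v k2 - v 0| := abs_sub_abs_le_abs_sub _ _
        have h6 : max M 0 < |v k2 - v 0| := by linarith
        have : |v k2 - v 0| = v k2 - v 0 := abs_of_nonneg (by linarith)
        nlinarith [le_max_left M 0]
      · intro x hxK
        rw [norm_xi_sub_one_of_sub]
        calc ‖xi (v k2) x - xi (v 0) x‖
            ≤ ‖xi (v k2) x - g x‖ + ‖g x - xi (v 0) x‖ := norm_sub_le_norm_sub_add_norm_sub _ _ _
          _ < δ / 2 + δ / 2 := by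
              rw [norm_sub_rev (xi (v k2) x)]
              exact add_lt_add ((hv k2 x hxK).trans_le (min_le_left _ _))
                ((hv 0 x hxK).trans_le (min_le_left _ _))
          _ = δ := by ring
    · refine ⟨v 0 - v k2, ?_, ?_⟩
      · have : |v k2| - |v 0| ≤ |v k2 - v 0| := abs_sub_abs_le_abs_sub _ _
        have h7 : |v k2 - v 0| = v 0 - v k2 := by rw [abs_sub_comm]; exact abs_of_nonneg (by linarith)
        nlinarith [le_max_left M 0]
      · intro x hxK
        rw [norm_xi_sub_one_of_sub]
        calc ‖xi (v 0) x - xi (v k2) x‖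
            ≤ ‖xi (v 0) x - g x‖ + ‖g x - xi (v k2) x‖ := norm_sub_le_norm_sub_add_norm_sub _ _ _
          _ < δ / 2 + δ / 2 := by
              rw [norm_sub_rev (xi (v 0) x)]
              exact add_lt_add ((hv 0 x hxK).trans_le (min_le_left _ _))
                ((hv k2 x hxK).trans_le (min_le_left _ _))
          _ = δ := by ring
  · push_neg at hP
    obtain ⟨s, hs⟩ := hP (fun _ => Complex.I) continuousOn_const (fun x _ => by simp)
    obtain ⟨x0, hx0⟩ := hne
    have hs0 : s ≠ 0 := by
      intro h
      have h1 := hs x0 hx0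
      rw [h, xi_zero] at h1
      have h2 := congrArg Complex.im h1
      simp at h2
    have habs : 0 < |s| := abs_pos.mpr hs0
    obtain ⟨m, hm⟩ := exists_nat_ge (M / (4 * |s|))
    have hI4 : Complex.I ^ (4 * m) = 1 := by
      rw [pow_mul]
      norm_num
    have hxi4 : ∀ x ∈ K, xi ((4 * m : ℕ) * s) x = 1 := by
      intro x hx
      rw [xi_pow, ← hs x hx]
      exact hI4
    refine ⟨4 * m * |s|, ?_, ?_⟩
    · have h2 : M / (4 * |s|) * (4 * |s|) ≤ (m : ℝ) * (4 * |s|) := by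
        apply mul_le_mul_of_nonneg_right hm (by positivity)
      rw [div_mul_cancel₀ _ (by positivity)] at h2
      calc M ≤ (m : ℝ) * (4 * |s|) := h2
        _ = 4 * m * |s| := by ring
    · intro x hx
      rcases abs_cases s with ⟨he, -⟩ | ⟨he, -⟩
      · have : (4 * (m:ℝ)) * |s| = ((4 * m : ℕ) : ℝ) * s := by rw [he]; push_cast; ring
        rw [this, hxi4 x hx]
        simpa using hδ
      · have : (4 * (m:ℝ)) * |s| = -(((4 * m : ℕ) : ℝ) * s) := by rw [he]; push_cast; ring
        rw [this, norm_xi_neg_sub_one, hxi4 x hx]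
        simpa using hδ

/-- bound an eLpNorm by a uniform bound on `K`. -/
lemma eLpNorm_le_of_bound_on (K : Set ℝ) (σ : Measure ℝ) (hconc : σ Kᶜ = 0)
    (ψ : ℝ → ℂ) (δ : ℝ) (hψ : ∀ x ∈ K, ‖ψ x‖ ≤ δ) :
    eLpNorm ψ 2 σ ≤ σ Set.univ ^ (2 : ℝ)⁻¹ * ENNReal.ofReal δ := by
  have haeK : ∀ᵐ x ∂σ, x ∈ K := by
    rw [ae_iff]
    exact hconc
  have hb : ∀ᵐ x ∂σ, ‖ψ x‖ ≤ δ := haeK.mono fun x hx => hψ x hx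
  have := eLpNorm_le_of_ae_bound (p := 2) (μ := σ) hb
  simpa using this

lemma sqrt_bound (σ : Measure ℝ) [IsFiniteMeasure σ] (δ c : ℝ) (hδ : 0 ≤ δ) (hc : 0 ≤ c)
    (hle : Real.sqrt (σ Set.univ).toReal * δ ≤ c) :
    σ Set.univ ^ (2 : ℝ)⁻¹ * ENNReal.ofReal δ ≤ ENNReal.ofReal c := by
  have h1 : σ Set.univ = ENNReal.ofReal (σ Set.univ).toReal :=
    (ENNReal.ofReal_toReal (measure_ne_top σ _)).symm
  rw [h1, ENNReal.ofReal_rpow_of_nonneg ENNReal.toReal_nonneg (by norm_num),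
    ← ENNReal.ofReal_mul (by positivity)]
  apply ENNReal.ofReal_le_ofReal
  have h2 : (σ Set.univ).toReal ^ ((2:ℝ)⁻¹) = Real.sqrt (σ Set.univ).toReal := by
    rw [Real.sqrt_eq_rpow, one_div]
  rw [h2]
  exact hle

lemma exists_char_ge_close (K : Set ℝ) (hK : IsKroneckerSet K) (hne : K.Nonempty)
    (σ : Measure ℝ) [IsFiniteMeasure σ] (hconc : σ Kᶜ = 0)
    (f : ℝ → ℂ) (hf : MemLp f 2 σ) (hf1 : ∀ᵐ x ∂σ, ‖f x‖ = 1)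
    (ε : ℝ) (hε : 0 < ε) (M : ℝ) :
    ∃ t : ℝ, M ≤ t ∧ eLpNorm (fun x => xi t x - f x) 2 σ ≤ ENNReal.ofReal ε := by
  classical
  set h : ℝ → ℝ := fun x => Complex.arg (f x) with hh_def
  have hhm : AEStronglyMeasurable h σ :=
    (Complex.measurable_arg.comp_aemeasurable
      hf.aestronglyMeasurable.aemeasurable).aestronglyMeasurable
  have hh2 : MemLp h 2 σ :=
    MemLp.of_bound hhm Real.pi
      (Eventually.of_forall fun x => by
        simpa [Real.norm_eq_abs] using Complex.abs_arg_le_pi (f x))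
  obtain ⟨θ, hθ, -⟩ := hh2.exists_boundedContinuous_eLpNorm_sub_le
    (by norm_num : (2 : ℝ≥0∞) ≠ ∞)
    (ne_of_gt (ENNReal.ofReal_pos.mpr (by positivity : (0:ℝ) < ε / 8)))
  set φ : ℝ → ℂ := fun x => Complex.exp ((θ x : ℂ) * Complex.I) with hφ_def
  have hφc : Continuous φ :=
    Complex.continuous_exp.comp
      ((Complex.continuous_ofReal.comp θ.continuous).mul continuous_const)
  have hφu : ∀ x, ‖φ x‖ = 1 := fun x => Complex.norm_exp_ofReal_mul_I _
  have hfh : (fun x => Complex.exp ((h x : ℂ) * Complex.I)) =ᵐ[σ] f := by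
    filter_upwards [hf1] with x hx
    have hx' : ‖f x‖ = 1 := hx
    have := Complex.norm_mul_exp_arg_mul_I (f x)
    rwa [hx', Complex.ofReal_one, one_mul] at this
  have hφf : eLpNorm (fun x => φ x - f x) 2 σ ≤ ENNReal.ofReal (ε / 4) := by
    have e1 : (fun x => φ x - f x)
        =ᵐ[σ] fun x => φ x - Complex.exp ((h x : ℂ) * Complex.I) := by
      filter_upwards [hfh] with x hx
      rw [hx]
    rw [eLpNorm_congr_ae e1]
    have e2 : ∀ x, ‖φ x - Complex.exp ((h x : ℂ) * Complex.I)‖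
        ≤ ‖(2 : ℝ) * (θ x - h x)‖ := by
      intro x
      have := norm_exp_sub_exp (θ x) (h x)
      rw [Real.norm_eq_abs, abs_mul]
      simpa using this
    calc eLpNorm (fun x => φ x - Complex.exp ((h x : ℂ) * Complex.I)) 2 σ
        ≤ eLpNorm (fun x => (2 : ℝ) * (θ x - h x)) 2 σ := eLpNorm_mono e2
      _ = eLpNorm ((2 : ℝ) • (⇑θ - h)) 2 σ := by
          congr 1
      _ = ‖(2:ℝ)‖₊ • eLpNorm (⇑θ - h) 2 σ := eLpNorm_const_smul _ _ _ _
      _ = 2 * eLpNorm (h - ⇑θ) 2 σ := by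
          rw [show ⇑θ - h = -(h - ⇑θ) by funext x; simp, eLpNorm_neg]
          simp [ENNReal.smul_def]
      _ ≤ 2 * ENNReal.ofReal (ε / 8) := by gcongr
      _ = ENNReal.ofReal (ε / 4) := by
          rw [show (2 : ℝ≥0∞) = ENNReal.ofReal (2:ℝ) by norm_num,
            ← ENNReal.ofReal_mul (by norm_num : (0:ℝ) ≤ 2)]
          congr 1
          ring
  set s : ℝ := Real.sqrt (σ Set.univ).toReal with hs_def
  have hs : 0 ≤ s := Real.sqrt_nonneg _
  set δ : ℝ := ε / 4 / (s + 1) with hδ_def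
  have hδp : 0 < δ := by positivity
  have hsb : s * δ ≤ ε / 4 := by
    have h1 : (s + 1) * δ = ε / 4 := by
      rw [hδ_def]
      field_simp
    nlinarith
  obtain ⟨t0, ht0⟩ := hK.2 φ hφc.continuousOn (fun x _ => hφu x) δ hδp
  obtain ⟨b, hb1, hb2⟩ := bohr_unbounded K hK hne δ hδp (M - t0)
  refine ⟨t0 + b, by linarith, ?_⟩
  have hbd1 : eLpNorm (fun x => xi (t0 + b) x - xi t0 x) 2 σ ≤ ENNReal.ofReal (ε / 4) := by
    refine (eLpNorm_le_of_bound_on K σ hconc _ δ ?_).trans (sqrt_bound σ δ _ hδp.le (by positivity) hsb)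
    intro x hx
    have : xi (t0 + b) x - xi t0 x = xi t0 x * (xi b x - 1) := by
      rw [xi_add]; ring
    rw [this, norm_mul, xi_norm, one_mul]
    exact (hb2 x hx).le
  have hbd2 : eLpNorm (fun x => xi t0 x - φ x) 2 σ ≤ ENNReal.ofReal (ε / 4) := by
    refine (eLpNorm_le_of_bound_on K σ hconc _ δ ?_).trans (sqrt_bound σ δ _ hδp.le (by positivity) hsb)
    intro x hx
    rw [norm_sub_rev]
    exact (ht0 x hx).le
  have m1 : AEStronglyMeasurable (fun x => xi (t0 + b) x - xi t0 x) σ :=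
    ((xi_cont' _).sub (xi_cont' _)).aestronglyMeasurable
  have m2 : AEStronglyMeasurable (fun x => xi t0 x - φ x) σ :=
    ((xi_cont' _).sub hφc).aestronglyMeasurable
  have m3 : AEStronglyMeasurable (fun x => φ x - f x) σ :=
    hφc.aestronglyMeasurable.sub hf.aestronglyMeasurable
  have hdec : (fun x => xi (t0 + b) x - f x)
      = fun x => (xi (t0 + b) x - xi t0 x) + ((xi t0 x - φ x) + (φ x - f x)) := by
    funext x; ring
  rw [hdec]
  calc eLpNorm (fun x => (xi (t0 + b) x - xi t0 x) + ((xi t0 x - φ x) + (φ x - f x))) 2 σ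
      ≤ eLpNorm (fun x => xi (t0 + b) x - xi t0 x) 2 σ
        + eLpNorm (fun x => (xi t0 x - φ x) + (φ x - f x)) 2 σ :=
        eLpNorm_add_le m1 (m2.add m3) one_le_two
    _ ≤ eLpNorm (fun x => xi (t0 + b) x - xi t0 x) 2 σ
        + (eLpNorm (fun x => xi t0 x - φ x) 2 σ + eLpNorm (fun x => φ x - f x) 2 σ) := by
        gcongr
        exact eLpNorm_add_le m2 m3 one_le_two
    _ ≤ ENNReal.ofReal (ε / 4) + (ENNReal.ofReal (ε / 4) + ENNReal.ofReal (ε / 4)) := by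
        gcongr
    _ ≤ ENNReal.ofReal ε := by
        rw [← ENNReal.ofReal_add (by positivity) (by positivity),
          ← ENNReal.ofReal_add (by positivity) (by positivity)]
        apply ENNReal.ofReal_le_ofReal
        linarith

theorem statement19 (K : Set ℝ) (hK : IsKroneckerSet K)
    (σ : Measure ℝ) [IsFiniteMeasure σ] (hconc : σ Kᶜ = 0) :
    ∀ f : ℝ → ℂ, MemLp f 2 σ → (∀ᵐ x ∂σ, ‖f x‖ = 1) →
      ∃ t : ℕ → ℝ, Tendsto t atTop atTop ∧
        Tendsto (fun n => eLpNorm (fun x => xi (t n) x - f x) 2 σ) atTop (𝓝 0) := by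
  intro f hf hf1
  by_cases hσ0 : σ Set.univ = 0
  · have hσ : σ = 0 := Measure.measure_univ_eq_zero.mp hσ0
    subst hσ
    refine ⟨fun n => n, tendsto_natCast_atTop_atTop, ?_⟩
    simp only [eLpNorm_measure_zero]
    exact tendsto_const_nhds
  · have hKne : K.Nonempty := by
      rw [Set.nonempty_iff_ne_empty]
      intro h
      rw [h, Set.compl_empty] at hconc
      exact hσ0 hconc
    have key : ∀ n : ℕ, ∃ t : ℝ, (n : ℝ) ≤ t ∧
        eLpNorm (fun x => xi t x - f x) 2 σ ≤ ENNReal.ofReal (((n : ℝ) + 1)⁻¹) :=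
      fun n => exists_char_ge_close K hK hKne σ hconc f hf hf1 _ (by positivity) n
    choose t ht1 ht2 using key
    refine ⟨t, tendsto_atTop_mono ht1 tendsto_natCast_atTop_atTop, ?_⟩
    have hlim : Tendsto (fun n : ℕ => ENNReal.ofReal (((n : ℝ) + 1)⁻¹)) atTop (𝓝 0) := by
      rw [show (0 : ℝ≥0∞) = ENNReal.ofReal 0 by simp]
      apply ENNReal.tendsto_ofReal
      simpa [one_div] using (tendsto_one_div_add_atTop_nhds_zero_nat :
        Tendsto (fun n : ℕ => 1 / ((n : ℝ) + 1)) atTop (𝓝 0))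
    exact tendsto_of_tendsto_of_tendsto_of_le_of_le tendsto_const_nhds hlim
      (fun n => zero_le) ht2
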